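/- Let E and E' be elliptic curves over F_q and suppose there exist isogenies φ : E → E' and φ' : E → E' of coprime degrees m and m'. Then for every n ≥ 1, the groups E(F_{q^n}) and E'(F_{q^n}) are isomorphic as abelian groups. -/

import Mathlib

open WeierstrassCurve.Affine in
theorem pointFinite {R : Type*} [CommRing R] [Finite R] (W : WeierstrassCurve.Affine R) :
    Finite W.Point := by
  let f : W.Point → Unit ⊕ (R × R) := fun P => match P with
    | .zero => .inl ()
    | @Point.some _ _ _ x y _ => .inr (x, y)
  have hf : Function.Injective f := by
    intro P Q h
    cases P <;> cases Q <;> simp only [f] at h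
    · rfl
    · exact absurd h (by simp)
    · exact absurd h (by simp)
    · simp only [Sum.inr.injEq, Prod.mk.injEq] at h
      obtain ⟨h1, h2⟩ := h
      subst h1; subst h2; rfl
  exact Finite.of_injective f hf

private lemma zsmul_congr {G : Type*} [AddCommGroup G] {e : ℕ}
    (he : ∀ x : G, (e : ℤ) • x = 0) {z w : ℤ} (h : (e : ℤ) ∣ z - w) (x : G) :
    z • x = w • x := by
  obtain ⟨k, hk⟩ := h
  have hz : z = w + e * k := by linarith
  rw [hz, add_smul, mul_smul, he (k • x), add_zero]

private lemma coprime_of_prime_not_dvd {x y : ℕ}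
    (h : ∀ p : ℕ, p.Prime → p ∣ x → ¬ p ∣ y) : Nat.Coprime x y := by
  by_contra hc
  have h2 : 2 ≤ Nat.gcd x y := by
    rcases Nat.eq_zero_or_pos (Nat.gcd x y) with h0 | h0
    · have hx : x = 0 := Nat.eq_zero_of_gcd_eq_zero_left h0
      have hy : y = 0 := Nat.eq_zero_of_gcd_eq_zero_right h0
      exact (h 2 Nat.prime_two (by simp [hx]) (by simp [hy])).elim
    · omega
  set p := (Nat.gcd x y).minFac with hp
  have hpp : p.Prime := Nat.minFac_prime (by omega)
  exact h p hpp ((Nat.minFac_dvd _).trans (Nat.gcd_dvd_left x y))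
    ((Nat.minFac_dvd _).trans (Nat.gcd_dvd_right x y))

private lemma iso_of_coprime_isogenies {A B : Type*} [AddCommGroup A] [AddCommGroup B]
    [Finite A] [Finite B]
    {m m' : ℕ} (hm : 0 < m) (hm' : 0 < m') (hcop : Nat.Coprime m m')
    (u : A →+ B) (v : B →+ A) (hu : ∀ x, v (u x) = m • x) (hu' : ∀ y, u (v y) = m • y)
    (w : A →+ B) (z : B →+ A) (hw : ∀ x, z (w x) = m' • x) (hw' : ∀ y, w (z y) = m' • y) :
    Nonempty (A ≃+ B) := by
  -- the integer e kills both groups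
  set e : ℕ := Nat.card A * Nat.card B with he_def
  have heA : ∀ x : A, (e : ℤ) • x = 0 := by
    intro x
    have h1 : (Nat.card A * Nat.card B) • x = Nat.card B • (Nat.card A • x) := by
      rw [mul_nsmul]
    rw [natCast_zsmul, he_def, h1, card_nsmul_eq_zero', smul_zero]
  have heB : ∀ y : B, (e : ℤ) • y = 0 := by
    intro y
    have h1 : (Nat.card A * Nat.card B) • y = Nat.card A • (Nat.card B • y) := by
      rw [mul_comm, mul_nsmul]
    rw [natCast_zsmul, he_def, h1, card_nsmul_eq_zero', smul_zero]
  have he : 0 < e := by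
    have := Nat.card_pos (α := A); have := Nat.card_pos (α := B); positivity
  -- split e = s * t with s the m-part, t coprime to m
  set s : ℕ := Nat.gcd e (m ^ e) with hs_def
  have hs_dvd : s ∣ e := Nat.gcd_dvd_left _ _
  set t : ℕ := e / s with ht_def
  have hst : s * t = e := Nat.mul_div_cancel' hs_dvd
  have hs_pos : 0 < s := Nat.gcd_pos_of_pos_left _ he
  have ht_pos : 0 < t := Nat.div_pos (Nat.le_of_dvd he hs_dvd) hs_pos
  -- primes dividing m do not divide t
  have key : ∀ p : ℕ, p.Prime → p ∣ m → ¬ p ∣ t := by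
    intro p hp hpm hpt
    have hpe : p ∣ e := hpt.trans (Nat.div_dvd_of_dvd hs_dvd)
    have hfacts : e.factorization p = s.factorization p + t.factorization p := by
      rw [← hst, Nat.factorization_mul hs_pos.ne' ht_pos.ne']; rfl
    have hsp : s.factorization p = min (e.factorization p) (e * m.factorization p) := by
      rw [hs_def, Nat.factorization_gcd he.ne' (pow_ne_zero _ hm.ne'),
        Nat.factorization_pow]
      rfl
    have h1 : e.factorization p < e := Nat.factorization_lt p he.ne'
    have h2 : 1 ≤ m.factorization p := (Nat.Prime.factorization_pos_of_dvd hp hm.ne' hpm)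
    have h3 : 1 ≤ t.factorization p := Nat.Prime.factorization_pos_of_dvd hp ht_pos.ne' hpt
    have : min (e.factorization p) (e * m.factorization p) = e.factorization p := by
      apply min_eq_left; nlinarith
    omega
  have hprime_s : ∀ p : ℕ, p.Prime → p ∣ s → p ∣ m := by
    intro p hp hps
    exact hp.dvd_of_dvd_pow (hps.trans (Nat.gcd_dvd_right _ _))
  have hmt : Nat.Coprime m t := coprime_of_prime_not_dvd key
  have hst_cop : Nat.Coprime s t :=
    coprime_of_prime_not_dvd fun p hp hps => key p hp (hprime_s p hp hps)
  have hm's : Nat.Coprime m' s := coprime_of_prime_not_dvd (by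
    intro p hp hpm' hps
    have h1 : p ∣ 1 := hcop ▸ Nat.dvd_gcd (hprime_s p hp hps) hpm'
    exact hp.one_lt.ne' (Nat.dvd_one.mp h1))
  -- Bezout coefficients
  obtain ⟨a, b, hab⟩ : IsCoprime (s : ℤ) (t : ℤ) := Nat.isCoprime_iff_coprime.mpr hst_cop
  obtain ⟨c, d, hcd⟩ : IsCoprime (m : ℤ) (t : ℤ) := Nat.isCoprime_iff_coprime.mpr hmt
  obtain ⟨c', d', hc'd'⟩ : IsCoprime ((m' : ℕ) : ℤ) ((s : ℕ) : ℤ) :=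
    Nat.isCoprime_iff_coprime.mpr hm's
  set P : ℤ := b * t with hP_def
  set Q : ℤ := a * s with hQ_def
  set R : ℤ := c' * P ^ 2 * m' + c * Q ^ 2 * m with hR_def
  have hest : ((e : ℤ)) = (s : ℤ) * t := by exact_mod_cast hst.symm
  have hPQ : (e : ℤ) ∣ P * Q - 0 := ⟨b * a, by rw [hest]; ring⟩
  have hsR : (s : ℤ) ∣ R - 1 := by
    have hsplit : R - 1 = c' * (m' : ℤ) * (P + 1) * (P - 1) + (c' * m' - 1) + c * m * Q ^ 2 := by
      ring
    rw [hsplit]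
    refine dvd_add (dvd_add (Dvd.dvd.mul_left ⟨-a, by linarith⟩ _) ⟨-d', by linarith⟩) ?_
    exact ⟨c * m * (a * a * s), by rw [hQ_def]; ring⟩
  have htR : (t : ℤ) ∣ R - 1 := by
    have hsplit : R - 1 = c * (m : ℤ) * (Q + 1) * (Q - 1) + (c * m - 1) + c' * m' * P ^ 2 := by
      ring
    rw [hsplit]
    refine dvd_add (dvd_add (Dvd.dvd.mul_left ⟨-b, by linarith⟩ _) ⟨-d, by linarith⟩) ?_
    exact ⟨c' * m' * (b * b * t), by rw [hP_def]; ring⟩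
  have hR1 : (e : ℤ) ∣ R - 1 := by
    rw [hest]; exact IsCoprime.mul_dvd ⟨a, b, hab⟩ hsR htR
  -- cast the duality relations to ℤ-scalars
  have hwz : ∀ x : A, z (w x) = (m' : ℤ) • x := fun x => by rw [hw, natCast_zsmul]
  have huz : ∀ x : A, v (u x) = (m : ℤ) • x := fun x => by rw [hu, natCast_zsmul]
  have hwz' : ∀ y : B, w (z y) = (m' : ℤ) • y := fun y => by rw [hw', natCast_zsmul]
  have huz' : ∀ y : B, u (v y) = (m : ℤ) • y := fun y => by rw [hu', natCast_zsmul]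
  -- the mutually inverse homomorphisms
  refine ⟨⟨⟨fun x => w (P • x) + u (Q • x),
           fun y => c' • z (P • y) + c • v (Q • y), ?_, ?_⟩, ?_⟩⟩
  · intro x
    simp only [smul_add, map_add, map_zsmul, hwz, huz, smul_smul]
    have z1 : (c' * (P * Q)) • z (u x) = 0 := by
      rw [zsmul_congr heA (show (e : ℤ) ∣ c' * (P * Q) - 0 by
        rw [sub_zero, hP_def, hQ_def, hest]; exact ⟨c' * b * a, by ring⟩) (z (u x)), zero_smul]
    have z2 : (c * (Q * P)) • v (w x) = 0 := by
      rw [zsmul_congr heA (show (e : ℤ) ∣ c * (Q * P) - 0 by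
        rw [sub_zero, hP_def, hQ_def, hest]; exact ⟨c * a * b, by ring⟩) (v (w x)), zero_smul]
    rw [z1, z2, add_zero, zero_add, ← add_smul]
    rw [zsmul_congr heA (show (e : ℤ) ∣ (c' * (P * P * (m' : ℤ)) + c * (Q * Q * (m : ℤ))) - 1 by
      rw [show c' * (P * P * (m' : ℤ)) + c * (Q * Q * (m : ℤ)) = R by rw [hR_def]; ring]
      exact hR1) x, one_smul]
  · intro y
    simp only [smul_add, map_add, map_zsmul, hwz', huz', smul_smul]
    have z1 : (P * (c * Q)) • w (v y) = 0 := by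
      rw [zsmul_congr heB (show (e : ℤ) ∣ P * (c * Q) - 0 by
        rw [sub_zero, hP_def, hQ_def, hest]; exact ⟨b * c * a, by ring⟩) (w (v y)), zero_smul]
    have z2 : (Q * (c' * P)) • u (z y) = 0 := by
      rw [zsmul_congr heB (show (e : ℤ) ∣ Q * (c' * P) - 0 by
        rw [sub_zero, hP_def, hQ_def, hest]; exact ⟨a * c' * b, by ring⟩) (u (z y)), zero_smul]
    rw [z1, z2, add_zero, zero_add, ← add_smul]
    rw [zsmul_congr heB (show (e : ℤ) ∣ (P * (c' * P) * (m' : ℤ) + Q * (c * Q) * (m : ℤ)) - 1 by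
      rw [show P * (c' * P) * (m' : ℤ) + Q * (c * Q) * (m : ℤ) = R by rw [hR_def]; ring]
      exact hR1) y, one_smul]
  · intro x y
    simp only [smul_add, map_add]
    abel



open scoped WeierstrassCurve.Affine
open scoped Classical

notation:max W:max "⟮" S:max "⟯" => WeierstrassCurve.Affine.Point (WeierstrassCurve.Affine.baseChange W S)

/-- Let `E` and `E'` be elliptic curves over a finite field `F_q` and
suppose there exist isogenies `φ : E → E'` and `φ' : E → E'` of coprime degrees `m` and `m'`.
Then for every `n ≥ 1`, the groups `E(F_{q^n})` and `E'(F_{q^n})` are isomorphic as abelian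
groups.

An isogeny of degree `m` is modelled by the group homomorphisms it induces on the points over
every field extension `L/F_q`, together with the dual isogeny: the two composites are
multiplication by `m`.  The fields `F_{q^n}` are the finite extensions `L` of `F_q`. -/
theorem elliptic_isogenies_coprime_degrees_points_isomorphic
    {K : Type} [Field K] [Fintype K]
    (E E' : WeierstrassCurve K) [E.IsElliptic] [E'.IsElliptic]
    (m m' : ℕ) (hm : 0 < m) (hm' : 0 < m') (hcop : Nat.Coprime m m')
    -- an isogeny φ : E → E' of degree m, with dual φd
    (φ : ∀ (L : Type) [Field L] [Algebra K L], E⟮L⟯ →+ E'⟮L⟯)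
    (φd : ∀ (L : Type) [Field L] [Algebra K L], E'⟮L⟯ →+ E⟮L⟯)
    (hφ : ∀ (L : Type) [Field L] [Algebra K L] (x : E⟮L⟯), φd L (φ L x) = m • x)
    (hφ' : ∀ (L : Type) [Field L] [Algebra K L] (y : E'⟮L⟯), φ L (φd L y) = m • y)
    -- an isogeny ψ : E → E' of degree m', with dual ψd
    (ψ : ∀ (L : Type) [Field L] [Algebra K L], E⟮L⟯ →+ E'⟮L⟯)
    (ψd : ∀ (L : Type) [Field L] [Algebra K L], E'⟮L⟯ →+ E⟮L⟯)
    (hψ : ∀ (L : Type) [Field L] [Algebra K L] (x : E⟮L⟯), ψd L (ψ L x) = m' • x)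
    (hψ' : ∀ (L : Type) [Field L] [Algebra K L] (y : E'⟮L⟯), ψ L (ψd L y) = m' • y) :
    -- E(F_{q^n}) ≅ E'(F_{q^n}) for every finite extension F_{q^n} of F_q
    ∀ (L : Type) [Field L] [Algebra K L] [Finite L], Nonempty (E⟮L⟯ ≃+ E'⟮L⟯) := by
  intro L _ _ _
  haveI : Finite (E⟮L⟯) := pointFinite _
  haveI : Finite (E'⟮L⟯) := pointFinite _
  exact iso_of_coprime_isogenies hm hm' hcop (φ L) (φd L) (hφ L) (hφ' L)
    (ψ L) (ψd L) (hψ L) (hψ' L)
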